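/- arXiv:2310.16363 — 2 statements merged into one kernel-verified Lean document; each statement's English description precedes it below -/
import Mathlib

section
/- Let S and 𝒜 be finite types, μ : S → ℝ and π : S → 𝒜 → ℝ nonnegative with Σ_s μ(s) = 1 and Σ_a π(s,a) = 1 for every s, and let f : S → ℝ^{d₁} satisfy ‖f(s)‖ ≤ 1. Let d : S × 𝒜 → ℝ, let h_1, …, h_N : S × 𝒜 → ℝ with |h_k(s,a)| ≤ U_c, and let α ∈ ℝ^N with |α_k| ≤ U_α. For γ ∈ ℝ^N set C(s,a,γ) = d(s,a) + Σ_{k=1}^N γ_k (h_k(s,a) − α_k), L(γ) = Σ_{s,a} μ(s)π(s,a) C(s,a,γ), and b(γ) = Σ_{s,a} μ(s)π(s,a)(C(s,a,γ) − L(γ)) f(s) ∈ ℝ^{d₁}. Let A be an invertible d₁ × d₁ matrix with ‖A⁻¹‖ ≤ λ_e^{-1} (λ_e > 0), and for each γ let v*(γ) be the unique solution of A v*(γ) + b(γ) = 0. Then for all γ¹, γ² ∈ ℝ^N with 0 ≤ γ^i_k ≤ M, one has ‖v*(γ¹) − v*(γ²)‖ ≤ (2N(U_c + U_α)/λ_e)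 · max_{k=1,…,N} |γ¹_k − γ²_k|. -/
/-- Proposition 2 of the paper: Lipschitz continuity in the Lagrange multiplier `γ` of
the TD(0) critic fixed point `v*(γ)` solving `A v*(γ) + b(γ) = 0`, where the stationary
state-action distribution has weights `μ(s)π(s,a)` and the single-stage Lagrangian cost
`C` is affine in `γ`. -/
theorem stmt_4 (S 𝒜 : Type*) [Fintype S] [Fintype 𝒜] (d₁ N : ℕ)
    (μ : S → ℝ) (π : S → 𝒜 → ℝ)
    (hμ0 : ∀ s, 0 ≤ μ s) (hπ0 : ∀ s a, 0 ≤ π s a)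
    (hμ1 : ∑ s, μ s = 1) (hπ1 : ∀ s, ∑ a, π s a = 1)
    (f : S → EuclideanSpace ℝ (Fin d₁)) (hf : ∀ s, ‖f s‖ ≤ 1)
    (dc : S → 𝒜 → ℝ) (h : Fin N → S → 𝒜 → ℝ) (α : Fin N → ℝ)
    (Uc Uα lam_e M : ℝ)
    (hh : ∀ k s a, |h k s a| ≤ Uc) (hα : ∀ k, |α k| ≤ Uα)
    (hlam : 0 < lam_e) (hM : 0 < M)
    (A B : EuclideanSpace ℝ (Fin d₁) →L[ℝ] EuclideanSpace ℝ (Fin d₁))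
    (hAB : A ∘L B = 1) (hBA : B ∘L A = 1) (hBnorm : ‖B‖ ≤ lam_e⁻¹)
    (C : S → 𝒜 → (Fin N → ℝ) → ℝ)
    (hC : ∀ s a γ, C s a γ = dc s a + ∑ k, γ k * (h k s a - α k))
    (L : (Fin N → ℝ) → ℝ)
    (hL : ∀ γ, L γ = ∑ s, ∑ a, μ s * π s a * C s a γ)
    (bvec : (Fin N → ℝ) → EuclideanSpace ℝ (Fin d₁))
    (hb : ∀ γ, bvec γ = ∑ s, ∑ a, (μ s * π s a * (C s a γ - L γ)) • f s)
    (vstar : (Fin N → ℝ) → EuclideanSpace ℝ (Fin d₁))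
    (hv : ∀ γ, A (vstar γ) + bvec γ = 0) :
    ∀ γ₁ γ₂ : Fin N → ℝ,
      (∀ k, 0 ≤ γ₁ k ∧ γ₁ k ≤ M) → (∀ k, 0 ≤ γ₂ k ∧ γ₂ k ≤ M) →
      ‖vstar γ₁ - vstar γ₂‖ ≤ (2 * N * (Uc + Uα) / lam_e) * ⨆ k, |γ₁ k - γ₂ k| := by
  intro γ₁ γ₂ hγ₁ hγ₂
  set D : ℝ := ⨆ k, |γ₁ k - γ₂ k| with hDdef
  have hD0 : 0 ≤ D := Real.iSup_nonneg fun k => abs_nonneg _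
  have hDk : ∀ k, |γ₁ k - γ₂ k| ≤ D := fun k =>
    le_ciSup (f := fun k => |γ₁ k - γ₂ k|) (Set.Finite.bddAbove (Set.finite_range _)) k
  set K : ℝ := (N : ℝ) * (Uc + Uα) * D with hKdef
  -- pointwise bound on the difference of costs
  have hCd : ∀ s a, |C s a γ₁ - C s a γ₂| ≤ K := by
    intro s a
    have hEq : C s a γ₁ - C s a γ₂ = ∑ k, (γ₁ k - γ₂ k) * (h k s a - α k) := by
      rw [hC, hC, add_sub_add_left_eq_sub, ← Finset.sum_sub_distrib]
      exact Finset.sum_congr rfl fun k _ => by ring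
    rw [hEq]
    calc |∑ k, (γ₁ k - γ₂ k) * (h k s a - α k)|
        ≤ ∑ k, |(γ₁ k - γ₂ k) * (h k s a - α k)| := Finset.abs_sum_le_sum_abs _ _
      _ ≤ ∑ _k : Fin N, D * (Uc + Uα) := by
          refine Finset.sum_le_sum fun k _ => ?_
          rw [abs_mul]
          refine mul_le_mul (hDk k) ?_ (abs_nonneg _) hD0
          calc |h k s a - α k| ≤ |h k s a| + |α k| := abs_sub _ _
            _ ≤ Uc + Uα := add_le_add (hh k s a) (hα k)
      _ = K := by simp [hKdef]; ring
  have hsum1 : ∑ s, ∑ a, μ s * π s a = 1 := by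
    simp only [← Finset.mul_sum]
    simp only [hπ1, mul_one, hμ1]
  have hμπ : ∀ s a, 0 ≤ μ s * π s a := fun s a => mul_nonneg (hμ0 s) (hπ0 s a)
  have hLd : |L γ₁ - L γ₂| ≤ K := by
    rw [hL, hL, ← Finset.sum_sub_distrib]
    simp only [← Finset.sum_sub_distrib, ← mul_sub]
    calc |∑ s, ∑ a, μ s * π s a * (C s a γ₁ - C s a γ₂)|
        ≤ ∑ s, ∑ a, |μ s * π s a * (C s a γ₁ - C s a γ₂)| := by
          refine le_trans (Finset.abs_sum_le_sum_abs _ _) ?_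
          exact Finset.sum_le_sum fun s _ => Finset.abs_sum_le_sum_abs _ _
      _ ≤ ∑ s, ∑ a, μ s * π s a * K := by
          refine Finset.sum_le_sum fun s _ => Finset.sum_le_sum fun a _ => ?_
          rw [abs_mul, abs_of_nonneg (hμπ s a)]
          exact mul_le_mul_of_nonneg_left (hCd s a) (hμπ s a)
      _ = K := by
          simp only [← Finset.sum_mul, hsum1, one_mul]
  have hΔb : ‖bvec γ₁ - bvec γ₂‖ ≤ 2 * K := by
    have hEq : bvec γ₁ - bvec γ₂
        = ∑ s, ∑ a, (μ s * π s a * ((C s a γ₁ - L γ₁) - (C s a γ₂ - L γ₂))) • f s := by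
      rw [hb, hb, ← Finset.sum_sub_distrib]
      refine Finset.sum_congr rfl fun s _ => ?_
      rw [← Finset.sum_sub_distrib]
      refine Finset.sum_congr rfl fun a _ => ?_
      rw [← sub_smul, ← mul_sub]
    rw [hEq]
    calc ‖∑ s, ∑ a, (μ s * π s a * ((C s a γ₁ - L γ₁) - (C s a γ₂ - L γ₂))) • f s‖
        ≤ ∑ s, ∑ a, ‖(μ s * π s a * ((C s a γ₁ - L γ₁) - (C s a γ₂ - L γ₂))) • f s‖ := by
          refine le_trans (norm_sum_le _ _) ?_
          exact Finset.sum_le_sum fun s _ => norm_sum_le _ _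
      _ ≤ ∑ s, ∑ a, μ s * π s a * (2 * K) := by
          refine Finset.sum_le_sum fun s _ => Finset.sum_le_sum fun a _ => ?_
          rw [norm_smul, Real.norm_eq_abs, abs_mul, abs_of_nonneg (hμπ s a)]
          have h1 : |(C s a γ₁ - L γ₁) - (C s a γ₂ - L γ₂)| ≤ 2 * K := by
            have : (C s a γ₁ - L γ₁) - (C s a γ₂ - L γ₂)
                = (C s a γ₁ - C s a γ₂) - (L γ₁ - L γ₂) := by ring
            rw [this]
            calc |(C s a γ₁ - C s a γ₂) - (L γ₁ - L γ₂)|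
                ≤ |C s a γ₁ - C s a γ₂| + |L γ₁ - L γ₂| := abs_sub _ _
              _ ≤ K + K := add_le_add (hCd s a) hLd
              _ = 2 * K := by ring
          calc μ s * π s a * |(C s a γ₁ - L γ₁) - (C s a γ₂ - L γ₂)| * ‖f s‖
              ≤ μ s * π s a * |(C s a γ₁ - L γ₁) - (C s a γ₂ - L γ₂)| * 1 := by
                refine mul_le_mul_of_nonneg_left (hf s) ?_
                exact mul_nonneg (hμπ s a) (abs_nonneg _)
            _ = μ s * π s a * |(C s a γ₁ - L γ₁) - (C s a γ₂ - L γ₂)| := mul_one _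
            _ ≤ μ s * π s a * (2 * K) := mul_le_mul_of_nonneg_left h1 (hμπ s a)
      _ = 2 * K := by
          simp only [← Finset.sum_mul, hsum1, one_mul]
  have hvB : ∀ γ, vstar γ = -(B (bvec γ)) := by
    intro γ
    have h1 : A (vstar γ) = -bvec γ := by
      have := hv γ
      linear_combination (norm := module) this
    have h2 : B (A (vstar γ)) = vstar γ := by
      have := congrArg (fun T : EuclideanSpace ℝ (Fin d₁) →L[ℝ] EuclideanSpace ℝ (Fin d₁) =>
        T (vstar γ)) hBA
      simpa using this
    rw [← h2, h1, map_neg]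
  have hKey : vstar γ₁ - vstar γ₂ = B (bvec γ₂ - bvec γ₁) := by
    rw [hvB, hvB, map_sub]
    abel
  rw [hKey]
  calc ‖B (bvec γ₂ - bvec γ₁)‖ ≤ ‖B‖ * ‖bvec γ₂ - bvec γ₁‖ := B.le_opNorm _
    _ ≤ lam_e⁻¹ * (2 * K) := by
        refine mul_le_mul hBnorm ?_ (norm_nonneg _) (le_of_lt (inv_pos.mpr hlam))
        rw [norm_sub_rev]; exact hΔb
    _ = (2 * N * (Uc + Uα) / lam_e) * D := by rw [hKdef]; ring
end

section
/- Let S and 𝒜 be finite types. For i = 1, 2 let μ_i : S → ℝ and π_i : S → 𝒜 → ℝ be nonnegative with Σ_s μ_i(s) = 1 and Σ_a π_i(s,a) = 1 for every s. Let d : S × 𝒜 → ℝ and h_1, …, h_N : S × 𝒜 → ℝ with |d(s,a)| ≤ U_c and |h_k(s,a)| ≤ U_c, let α ∈ ℝ^N with |α_k| ≤ U_α, let M > 0, and let γ¹, γ² ∈ ℝ^N with 0 ≤ γ^i_k ≤ M. Define L_i = Σ_{s,a} μ_i(s)π_i(s,a) (d(s,a) + Σ_{k=1}^N γ^i_k (h_k(s,a)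 − α_k)) and U_r = U_c + NM(U_c + U_α). If (1/2) Σ_{s,a} |μ₁(s)π₁(s,a) − μ₂(s)π₂(s,a)| ≤ K, then |L₁ − L₂| ≤ N(U_c + U_α) · max_{k} |γ¹_k − γ²_k| + 2U_r K. -/
/-- Lemma 5 of the paper: joint Lipschitz-type bound
`|L₁ − L₂| ≤ N(U_c + U_α)·max_k|γ¹_k − γ²_k| + 2U_r·K` for the average Lagrangian cost,
where `K` bounds the total variation distance between the two stationary state-action
distributions and `U_r = U_c + NM(U_c + U_α)`. -/
theorem stmt_8 (S 𝒜 : Type*) [Fintype S] [Fintype 𝒜] (N : ℕ)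
    (μ₁ μ₂ : S → ℝ) (π₁ π₂ : S → 𝒜 → ℝ)
    (hμ₁0 : ∀ s, 0 ≤ μ₁ s) (hμ₂0 : ∀ s, 0 ≤ μ₂ s)
    (hπ₁0 : ∀ s a, 0 ≤ π₁ s a) (hπ₂0 : ∀ s a, 0 ≤ π₂ s a)
    (hμ₁1 : ∑ s, μ₁ s = 1) (hμ₂1 : ∑ s, μ₂ s = 1)
    (hπ₁1 : ∀ s, ∑ a, π₁ s a = 1) (hπ₂1 : ∀ s, ∑ a, π₂ s a = 1)
    (dc : S → 𝒜 → ℝ) (h : Fin N → S → 𝒜 → ℝ) (α : Fin N → ℝ)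
    (Uc Uα M K : ℝ) (hM : 0 < M)
    (hdc : ∀ s a, |dc s a| ≤ Uc) (hh : ∀ k s a, |h k s a| ≤ Uc)
    (hα : ∀ k, |α k| ≤ Uα)
    (γ₁ γ₂ : Fin N → ℝ)
    (hγ₁ : ∀ k, 0 ≤ γ₁ k ∧ γ₁ k ≤ M) (hγ₂ : ∀ k, 0 ≤ γ₂ k ∧ γ₂ k ≤ M)
    (L₁ L₂ Ur : ℝ)
    (hL₁ : L₁ = ∑ s, ∑ a, μ₁ s * π₁ s a * (dc s a + ∑ k, γ₁ k * (h k s a - α k)))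
    (hL₂ : L₂ = ∑ s, ∑ a, μ₂ s * π₂ s a * (dc s a + ∑ k, γ₂ k * (h k s a - α k)))
    (hUr : Ur = Uc + N * M * (Uc + Uα))
    (hK : (1 / 2) * ∑ s, ∑ a, |μ₁ s * π₁ s a - μ₂ s * π₂ s a| ≤ K) :
    |L₁ - L₂| ≤ N * (Uc + Uα) * (⨆ k, |γ₁ k - γ₂ k|) + 2 * Ur * K := by
  have hS : Nonempty S := by
    by_contra hc
    rw [not_nonempty_iff] at hc
    simp [Finset.univ_eq_empty] at hμ₁1
  have hA : Nonempty 𝒜 := by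
    by_contra hc
    rw [not_nonempty_iff] at hc
    obtain ⟨s⟩ := hS
    have := hπ₁1 s
    simp [Finset.univ_eq_empty] at this
  obtain ⟨s₀⟩ := hS
  obtain ⟨a₀⟩ := hA
  have hUc : 0 ≤ Uc := le_trans (abs_nonneg _) (hdc s₀ a₀)
  set G : ℝ := ⨆ k, |γ₁ k - γ₂ k| with hGdef
  have hG : ∀ k, |γ₁ k - γ₂ k| ≤ G := fun k =>
    le_ciSup (f := fun k => |γ₁ k - γ₂ k|) (Set.Finite.bddAbove (Set.finite_range _)) k
  have hUr0 : 0 ≤ Ur := by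
    rcases Nat.eq_zero_or_pos N with hN | hN
    · subst hN; simpa [hUr] using hUc
    · have hUα : 0 ≤ Uα := le_trans (abs_nonneg _) (hα ⟨0, hN⟩)
      rw [hUr]
      exact add_nonneg hUc (mul_nonneg (mul_nonneg (Nat.cast_nonneg N) hM.le)
        (add_nonneg hUc hUα))
  set f₁ : S → 𝒜 → ℝ := fun s a => dc s a + ∑ k, γ₁ k * (h k s a - α k) with hf₁
  set f₂ : S → 𝒜 → ℝ := fun s a => dc s a + ∑ k, γ₂ k * (h k s a - α k) with hf₂
  have hf2b : ∀ s a, |f₂ s a| ≤ Ur := by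
    intro s a
    calc |f₂ s a| ≤ |dc s a| + |∑ k, γ₂ k * (h k s a - α k)| := abs_add_le _ _
      _ ≤ Uc + ∑ k, |γ₂ k * (h k s a - α k)| :=
          add_le_add (hdc s a) (Finset.abs_sum_le_sum_abs _ _)
      _ ≤ Uc + ∑ _k : Fin N, M * (Uc + Uα) := by
          gcongr with k _
          rw [abs_mul]
          refine mul_le_mul ?_ ((abs_sub _ _).trans (add_le_add (hh k s a) (hα k)))
            (abs_nonneg _) hM.le
          rw [abs_of_nonneg (hγ₂ k).1]; exact (hγ₂ k).2
      _ = Ur := by rw [hUr]; simp [Finset.sum_const]; ring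
  have key : ∀ s a, |f₁ s a - f₂ s a| ≤ N * (Uc + Uα) * G := by
    intro s a
    have e : f₁ s a - f₂ s a = ∑ k, (γ₁ k - γ₂ k) * (h k s a - α k) := by
      simp only [hf₁, hf₂]
      rw [add_sub_add_left_eq_sub, ← Finset.sum_sub_distrib]
      exact Finset.sum_congr rfl fun k _ => by ring
    rw [e]
    calc |∑ k, (γ₁ k - γ₂ k) * (h k s a - α k)|
        ≤ ∑ k, |(γ₁ k - γ₂ k) * (h k s a - α k)| := Finset.abs_sum_le_sum_abs _ _
      _ ≤ ∑ _k : Fin N, G * (Uc + Uα) := Finset.sum_le_sum fun k _ => by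
          rw [abs_mul]
          exact mul_le_mul (hG k) ((abs_sub _ _).trans (add_le_add (hh k s a) (hα k)))
            (abs_nonneg _) (le_trans (abs_nonneg _) (hG k))
      _ = N * (Uc + Uα) * G := by simp [Finset.sum_const]; ring
  have hdecomp : L₁ - L₂ = ∑ s, ∑ a, (μ₁ s * π₁ s a * (f₁ s a - f₂ s a)
      + (μ₁ s * π₁ s a - μ₂ s * π₂ s a) * f₂ s a) := by
    rw [hL₁, hL₂, ← Finset.sum_sub_distrib]
    refine Finset.sum_congr rfl fun s _ => ?_
    rw [← Finset.sum_sub_distrib]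
    refine Finset.sum_congr rfl fun a _ => ?_
    simp only [hf₁, hf₂]; ring
  have hsum1 : ∑ s, ∑ a, μ₁ s * π₁ s a = 1 := by
    simp_rw [← Finset.mul_sum, hπ₁1, mul_one]
    exact hμ₁1
  have hTV : ∑ s, ∑ a, |μ₁ s * π₁ s a - μ₂ s * π₂ s a| ≤ 2 * K := by linarith
  calc |L₁ - L₂|
      = |∑ s, ∑ a, (μ₁ s * π₁ s a * (f₁ s a - f₂ s a)
          + (μ₁ s * π₁ s a - μ₂ s * π₂ s a) * f₂ s a)| := by rw [hdecomp]
    _ ≤ ∑ s, ∑ a, |μ₁ s * π₁ s a * (f₁ s a - f₂ s a)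
          + (μ₁ s * π₁ s a - μ₂ s * π₂ s a) * f₂ s a| :=
        (Finset.abs_sum_le_sum_abs _ _).trans
          (Finset.sum_le_sum fun s _ => Finset.abs_sum_le_sum_abs _ _)
    _ ≤ ∑ s, ∑ a, (μ₁ s * π₁ s a * (N * (Uc + Uα) * G)
          + |μ₁ s * π₁ s a - μ₂ s * π₂ s a| * Ur) := by
        refine Finset.sum_le_sum fun s _ => Finset.sum_le_sum fun a _ => ?_
        calc |μ₁ s * π₁ s a * (f₁ s a - f₂ s a)
              + (μ₁ s * π₁ s a - μ₂ s * π₂ s a) * f₂ s a|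
            ≤ |μ₁ s * π₁ s a * (f₁ s a - f₂ s a)|
              + |(μ₁ s * π₁ s a - μ₂ s * π₂ s a) * f₂ s a| := abs_add_le _ _
          _ ≤ μ₁ s * π₁ s a * (N * (Uc + Uα) * G)
              + |μ₁ s * π₁ s a - μ₂ s * π₂ s a| * Ur := by
              rw [abs_mul, abs_mul, abs_mul, abs_of_nonneg (hμ₁0 s), abs_of_nonneg (hπ₁0 s a)]
              exact add_le_add
                (mul_le_mul_of_nonneg_left (key s a) (mul_nonneg (hμ₁0 s) (hπ₁0 s a)))
                (mul_le_mul_of_nonneg_left (hf2b s a) (abs_nonneg _))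
    _ = (∑ s, ∑ a, μ₁ s * π₁ s a) * (N * (Uc + Uα) * G)
          + (∑ s, ∑ a, |μ₁ s * π₁ s a - μ₂ s * π₂ s a|) * Ur := by
        simp_rw [Finset.sum_add_distrib, ← Finset.sum_mul]
    _ ≤ 1 * (N * (Uc + Uα) * G) + (2 * K) * Ur := by
        rw [hsum1]
        exact add_le_add le_rfl (mul_le_mul_of_nonneg_right hTV hUr0)
    _ = N * (Uc + Uα) * G + 2 * Ur * K := by ring
end
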